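/- Let H be a complex separable Hilbert space, A : H → H a closed densely defined operator, and B a linear operator on C^N (N ≥ 1) such that the spectrum of A and the spectrum of B are disjoint. Then for every bounded linear operator V : C^N → H there exists a unique bounded linear operator U : C^N → D(A) (the domain of A) such that AU − UB = V. -/

import Mathlib

open Polynomial

/-- Uniqueness: a homogeneous solution `U` of the Sylvester equation vanishes, given a list
of scalars with resolvents whose corresponding product of `B - z•1` annihilates enough. -/
theorem stmt_0_uniq_aux {H D E : Type*} [NormedAddCommGroup H] [NormedSpace ℂ H]
    [NormedAddCommGroup D] [NormedSpace ℂ D]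
    [NormedAddCommGroup E] [NormedSpace ℂ E]
    (ι : D →L[ℂ] H) (A : D →L[ℂ] H) (B : E →L[ℂ] E)
    (U : E →L[ℂ] D)
    (hU : ∀ v, A (U v) - ι (U (B v)) = 0)
    (l : List ℂ)
    (hres : ∀ z ∈ l, ∃ R : H →L[ℂ] D,
      (∀ x : D, R (A x - z • ι x) = x) ∧ (∀ y : H, A (R y) - z • ι (R y) = y))
    (h0 : ∀ x, U ((l.map (fun z => B - z • 1)).prod x) = 0) :
    U = 0 := by
  induction l with
  | nil =>
    ext v
    simpa using h0 v
  | cons z l ih =>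
    obtain ⟨R, hR1, _⟩ := hres z (by simp)
    have key : ∀ w, U w = R (ι (U ((B - z • (1 : E →L[ℂ] E)) w))) := by
      intro w
      have h1 : ι (U (B w)) = A (U w) := by
        have := hU w; linear_combination (norm := module) -this
      have h2 : U ((B - z • (1 : E →L[ℂ] E)) w) = U (B w) - z • U w := by
        simp [ContinuousLinearMap.sub_apply, map_sub, map_smul]
      rw [h2, map_sub, map_smul, h1]
      exact (hR1 (U w)).symm
    refine ih (fun w hw => hres w (by simp [hw])) ?_
    intro x
    have hx := h0 x
    rw [List.map_cons, List.prod_cons, ContinuousLinearMap.mul_apply] at hx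
    rw [key ((List.map (fun z => B - z • 1) l).prod x), hx]
    simp

/-- Existence: the Sylvester equation can be solved on the kernel of the product of the
`B - z•1` over a list of scalars each admitting a resolvent. -/
theorem stmt_0_ex_aux {H D E : Type*} [NormedAddCommGroup H] [NormedSpace ℂ H]
    [NormedAddCommGroup D] [NormedSpace ℂ D]
    [NormedAddCommGroup E] [NormedSpace ℂ E]
    (ι : D →L[ℂ] H) (A : D →L[ℂ] H) (B : E →L[ℂ] E)
    (l : List ℂ)
    (hres : ∀ z ∈ l, ∃ R : H →L[ℂ] D,
      (∀ x : D, R (A x - z • ι x) = x) ∧ (∀ y : H, A (R y) - z • ι (R y) = y))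
    (V : E →L[ℂ] H) :
    ∃ U : E →L[ℂ] D, ∀ v, (l.map (fun z => B - z • 1)).prod v = 0 →
      A (U v) - ι (U (B v)) = V v := by
  induction l generalizing V with
  | nil =>
    refine ⟨0, fun v hv => ?_⟩
    simp only [List.map_nil, List.prod_nil, ContinuousLinearMap.one_apply] at hv
    subst hv
    simp
  | cons z l ih =>
    obtain ⟨R, hR1, hR2⟩ := hres z (by simp)
    obtain ⟨U₁, hU₁⟩ := ih (fun w hw => hres w (by simp [hw])) (ι.comp (R.comp V))
    refine ⟨R.comp V + U₁.comp (B - z • 1), fun v hv => ?_⟩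
    rw [List.map_cons, List.prod_cons, ContinuousLinearMap.mul_apply] at hv
    have hcomm : Commute (B - z • (1 : E →L[ℂ] E))
        ((l.map (fun w => B - w • (1 : E →L[ℂ] E))).prod) := by
      refine Commute.list_prod_right _ _ (fun c hc => ?_)
      obtain ⟨w, _, rfl⟩ := List.mem_map.mp hc
      exact ((Commute.refl B).sub_right (((Commute.one_right B).smul_right w))).sub_left
        (((Commute.one_left B).smul_left z).sub_right
          (((Commute.one_left (1 : E →L[ℂ] E)).smul_left z).smul_right w))
    have hker : (l.map (fun w => B - w • (1 : E →L[ℂ] E))).prod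
        ((B - z • (1 : E →L[ℂ] E)) v) = 0 := by
      have := congrArg (fun (T : E →L[ℂ] E) => T v) hcomm.symm.eq
      simp only [ContinuousLinearMap.mul_apply] at this
      rw [this, hv]
    have h1 := hU₁ ((B - z • (1 : E →L[ℂ] E)) v) hker
    have hBv : (B - z • (1 : E →L[ℂ] E)) (B v) = B ((B - z • (1 : E →L[ℂ] E)) v) := by
      simp [ContinuousLinearMap.sub_apply, map_smul]
    have hRprop : A (R (V v)) - z • ι (R (V v)) = V v := hR2 (V v)
    simp only [ContinuousLinearMap.add_apply, ContinuousLinearMap.comp_apply, map_add,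
      ContinuousLinearMap.coe_comp'] at h1 ⊢
    rw [hBv]
    have expand : ι (R (V (B v))) = ι (R (V ((B - z • (1 : E →L[ℂ] E)) v))) + z • ι (R (V v)) := by
      have : V (B v) = V ((B - z • (1 : E →L[ℂ] E)) v) + z • V v := by
        simp [ContinuousLinearMap.sub_apply, map_sub, map_smul]
      rw [this, map_add, map_add, map_smul, map_smul]
    rw [expand]
    have h1' : ι (U₁ (B ((B - z • (1:E →L[ℂ] E)) v)))
        = A (U₁ ((B - z • (1:E →L[ℂ] E)) v)) - ι (R (V ((B - z • (1:E →L[ℂ] E)) v))) := by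
      linear_combination (norm := module) -h1
    rw [h1']
    linear_combination (norm := module) hRprop

/-- Every root of the minimal polynomial of an element of a finite-dimensional algebra
belongs to its spectrum. -/
theorem stmt_0_root_mem_spectrum {𝔸 : Type*} [Ring 𝔸] [Algebra ℂ 𝔸] [Nontrivial 𝔸]
    [Module.Finite ℂ 𝔸] (B : 𝔸) {z : ℂ}
    (hz : z ∈ (minpoly ℂ B).roots) : z ∈ spectrum ℂ B := by
  have hint : IsIntegral ℂ B := IsIntegral.of_finite ℂ B
  have hp0 : minpoly ℂ B ≠ 0 := minpoly.ne_zero hint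
  have hroot : (minpoly ℂ B).IsRoot z := isRoot_of_mem_roots hz
  obtain ⟨q, hq⟩ := dvd_iff_isRoot.mpr hroot
  have hq0 : q ≠ 0 := by
    rintro rfl; rw [mul_zero] at hq; exact hp0 hq
  rw [spectrum.mem_iff]
  intro hu
  have haev : (0 : 𝔸) = (B - algebraMap ℂ 𝔸 z) * aeval B q := by
    have := minpoly.aeval ℂ B
    rw [hq, map_mul, map_sub, aeval_X, aeval_C] at this
    exact this.symm
  have hu' : IsUnit (B - algebraMap ℂ 𝔸 z) := by
    have := hu.neg
    rwa [neg_sub] at this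
  have hq' : aeval B q = 0 := by
    obtain ⟨u, hufoo⟩ := hu'
    calc aeval B q = (↑u⁻¹ * u : 𝔸) * aeval B q := by rw [u.inv_mul, one_mul]
    _ = ↑u⁻¹ * ((B - algebraMap ℂ 𝔸 z) * aeval B q) := by rw [hufoo, mul_assoc]
    _ = 0 := by rw [← haev, mul_zero]
  have hdeg : (minpoly ℂ B).degree ≤ q.degree := minpoly.degree_le_of_ne_zero ℂ B hq0 hq'
  have hlt : q.degree < (minpoly ℂ B).degree := by
    rw [hq, degree_mul, degree_X_sub_C, degree_eq_natDegree hq0]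
    exact_mod_cast (by exact_mod_cast (by omega : q.natDegree < 1 + q.natDegree) :
      (q.natDegree : WithBot ℕ) < 1 + q.natDegree)
  exact absurd hdeg (not_le.mpr hlt)

/-- Let `H` be a complex separable Hilbert space, `A` a closed densely
defined operator on `H` (modeled by a continuous linear map `A : D →L[ℂ] H` from a Banach
"domain" space `D` continuously and densely injected in `H` by `ι`), and `B` a linear
operator on `ℂ^N` (`N ≥ 1`) whose spectrum is disjoint from that of `A` (every `z` in the
spectrum of `B` belongs to the resolvent set of `A`). Then for every bounded operator
`V : ℂ^N → H` there is a unique bounded operator `U : ℂ^N → D(A)` with `A U - U B = V`. -/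
theorem stmt_0
    {H D : Type*} [NormedAddCommGroup H] [InnerProductSpace ℂ H]
    [CompleteSpace H] [TopologicalSpace.SeparableSpace H]
    [NormedAddCommGroup D] [NormedSpace ℂ D] [CompleteSpace D]
    (ι : D →L[ℂ] H) (hι : Function.Injective ι) (hdense : Dense (Set.range ι))
    {N : ℕ} (hN : 1 ≤ N)
    (A : D →L[ℂ] H)
    (B : EuclideanSpace ℂ (Fin N) →L[ℂ] EuclideanSpace ℂ (Fin N))
    (hdisj : ∀ z ∈ spectrum ℂ B, ∃ R : H →L[ℂ] D,
      (∀ x : D, R (A x - z • ι x) = x) ∧ (∀ y : H, A (R y) - z • ι (R y) = y))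
    (V : EuclideanSpace ℂ (Fin N) →L[ℂ] H) :
    ∃! U : EuclideanSpace ℂ (Fin N) →L[ℂ] D,
      ∀ v, A (U v) - ι (U (B v)) = V v := by
  haveI : Nonempty (Fin N) := ⟨⟨0, hN⟩⟩
  haveI : Nontrivial (EuclideanSpace ℂ (Fin N)) := inferInstance
  haveI : Nontrivial (EuclideanSpace ℂ (Fin N) →L[ℂ] EuclideanSpace ℂ (Fin N)) := by
    obtain ⟨x, hx⟩ := exists_ne (0 : EuclideanSpace ℂ (Fin N))
    refine ⟨1, 0, fun h => hx ?_⟩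
    have := congrArg
      (fun T : EuclideanSpace ℂ (Fin N) →L[ℂ] EuclideanSpace ℂ (Fin N) => T x) h
    simpa using this
  have hint : IsIntegral ℂ B := IsIntegral.of_finite ℂ B
  set p := minpoly ℂ B with hp
  have hmonic : p.Monic := minpoly.monic hint
  have hsplit := Polynomial.Splits.eq_prod_roots_of_monic
    (IsAlgClosed.splits p) hmonic
  set l := p.roots.toList with hl
  have hprod : ((l.map (fun z => B - z •
      (1 : EuclideanSpace ℂ (Fin N) →L[ℂ] EuclideanSpace ℂ (Fin N)))).prod) = 0 := by
    have h1 : aeval B p = 0 := minpoly.aeval ℂ B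
    have h2 : p = (l.map (fun a => X - C a)).prod := by
      rw [hl]
      calc p = (Multiset.map (fun a => X - C a) p.roots).prod := hsplit
        _ = (Multiset.map (fun a => X - C a) ↑(p.roots.toList)).prod := by
            rw [Multiset.coe_toList]
        _ = ((List.map (fun a => X - C a) p.roots.toList : List ℂ[X]) : Multiset ℂ[X]).prod := by
            rw [Multiset.map_coe]
        _ = (List.map (fun a => X - C a) p.roots.toList).prod := by
            rw [Multiset.prod_coe]
    rw [h2, map_list_prod] at h1
    rw [← h1, List.map_map]
    refine congrArg List.prod (List.map_congr_left fun a _ => ?_)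
    simp [Algebra.algebraMap_eq_smul_one]
  have hres : ∀ z ∈ l, ∃ R : H →L[ℂ] D,
      (∀ x : D, R (A x - z • ι x) = x) ∧ (∀ y : H, A (R y) - z • ι (R y) = y) := by
    intro z hz
    refine hdisj z (stmt_0_root_mem_spectrum B ?_)
    rwa [hl, Multiset.mem_toList] at hz
  obtain ⟨U, hUex⟩ := stmt_0_ex_aux ι A B l hres V
  have hU : ∀ v, A (U v) - ι (U (B v)) = V v := by
    intro v
    refine hUex v ?_
    rw [hprod]
    rfl
  refine ⟨U, hU, fun U' hU' => ?_⟩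
  have hsub : U' - U = 0 := by
    refine stmt_0_uniq_aux ι A B (U' - U) ?_ l hres ?_
    · intro v
      simp only [ContinuousLinearMap.sub_apply, map_sub]
      have h1 := hU' v
      have h2 := hU v
      linear_combination (norm := module) h1 - h2
    · intro x
      rw [hprod]
      simp
  exact sub_eq_zero.mp hsub
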